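/- There exists a nonempty closed subset Q of Baire space such that for every closed subset P of Cantor space there do not exist maps Φ, Ψ : (ℕ → ℕ) → (ℕ → ℕ) with: Ψ continuous, Φ '' Q ⊆ P, Ψ '' P ⊆ Q, Φ f ≤ᵀ f for every f ∈ Q, and Ψ h ≤ᵀ h for every h ∈ P. (In particular, Q is not Medvedev equivalent to any closed subset of Cantor space, since Turing functionals are continuous and map each oracle to an output computable from it.) -/

import Mathlib

/-- Partial recursiveness in an oracle `g` (following Mathlib's `Nat.Partrec`,
with an extra `oracle` constructor). -/
inductive OracleRecursiveIn (g : ℕ →. ℕ) : (ℕ →. ℕ) → Prop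
  | zero : OracleRecursiveIn g (fun _ => Part.some 0)
  | succ : OracleRecursiveIn g ↑Nat.succ
  | left : OracleRecursiveIn g ↑(fun n : ℕ => n.unpair.1)
  | right : OracleRecursiveIn g ↑(fun n : ℕ => n.unpair.2)
  | oracle : OracleRecursiveIn g g
  | pair {f h : ℕ →. ℕ} : OracleRecursiveIn g f → OracleRecursiveIn g h →
      OracleRecursiveIn g (fun n => Nat.pair <$> f n <*> h n)
  | comp {f h : ℕ →. ℕ} : OracleRecursiveIn g f → OracleRecursiveIn g h →
      OracleRecursiveIn g (fun n => h n >>= f)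
  | prec {f h : ℕ →. ℕ} : OracleRecursiveIn g f → OracleRecursiveIn g h →
      OracleRecursiveIn g (Nat.unpaired fun a n =>
        n.rec (f a) fun y IH => do let i ← IH; h (Nat.pair a (Nat.pair y i)))
  | rfind {f : ℕ →. ℕ} : OracleRecursiveIn g f →
      OracleRecursiveIn g (fun a => Nat.rfind fun n => (fun m => m = 0) <$> f (Nat.pair a n))

/-- `f ≤ᵀ g` : `f` is Turing reducible to `g`, i.e. `f` is computable with oracle `g`. -/
def OracleTuringReducible (f g : ℕ → ℕ) : Prop :=
  OracleRecursiveIn ↑g ↑f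

infix:50 " ≤ᵀ " => OracleTuringReducible

inductive OCode : Type
  | zero | succ | left | right | oracle
  | pair (a b : OCode) | comp (a b : OCode) | prec (a b : OCode) | rfind (a : OCode)

def oeval (g : ℕ → ℕ) : OCode → (ℕ →. ℕ)
  | .zero => fun _ => Part.some 0
  | .succ => ↑Nat.succ
  | .left => ↑(fun n : ℕ => n.unpair.1)
  | .right => ↑(fun n : ℕ => n.unpair.2)
  | .oracle => ↑g
  | .pair a b => fun n => Nat.pair <$> oeval g a n <*> oeval g b n
  | .comp a b => fun n => oeval g b n >>= oeval g a
  | .prec a b => Nat.unpaired fun x n =>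
      n.rec (oeval g a x) fun y IH => do let i ← IH; oeval g b (Nat.pair x (Nat.pair y i))
  | .rfind a => fun x => Nat.rfind fun n => (fun m => m = 0) <$> oeval g a (Nat.pair x n)

theorem exists_code {g : ℕ → ℕ} {f : ℕ →. ℕ} (h : OracleRecursiveIn ↑g f) :
    ∃ c : OCode, oeval g c = f := by
  induction h with
  | zero => exact ⟨.zero, rfl⟩
  | succ => exact ⟨.succ, rfl⟩
  | left => exact ⟨.left, rfl⟩
  | right => exact ⟨.right, rfl⟩
  | oracle => exact ⟨.oracle, rfl⟩
  | pair _ _ ih1 ih2 =>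
      obtain ⟨c1, rfl⟩ := ih1; obtain ⟨c2, rfl⟩ := ih2; exact ⟨.pair c1 c2, rfl⟩
  | comp _ _ ih1 ih2 =>
      obtain ⟨c1, rfl⟩ := ih1; obtain ⟨c2, rfl⟩ := ih2; exact ⟨.comp c1 c2, rfl⟩
  | prec _ _ ih1 ih2 =>
      obtain ⟨c1, rfl⟩ := ih1; obtain ⟨c2, rfl⟩ := ih2; exact ⟨.prec c1 c2, rfl⟩
  | rfind _ ih =>
      obtain ⟨c, rfl⟩ := ih; exact ⟨.rfind c, rfl⟩

theorem oeval_use {g : ℕ → ℕ} (c : OCode) {n m : ℕ} (h : m ∈ oeval g c n) :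
    ∃ u : ℕ, ∀ g' : ℕ → ℕ, (∀ i < u, g' i = g i) → m ∈ oeval g' c n := by
  induction c generalizing n m with
  | zero => exact ⟨0, fun g' _ => h⟩
  | succ => exact ⟨0, fun g' _ => h⟩
  | left => exact ⟨0, fun g' _ => h⟩
  | right => exact ⟨0, fun g' _ => h⟩
  | oracle =>
      refine ⟨n + 1, fun g' hg' => ?_⟩
      simp only [oeval, PFun.coe_val, Part.mem_some_iff] at h ⊢
      rw [hg' n (by omega)]; exact h
  | pair a b iha ihb =>
      simp only [oeval, Seq.seq, Part.map_eq_map, Part.bind_eq_bind, Part.mem_bind_iff,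
        Part.mem_map_iff] at h
      obtain ⟨_, ⟨ma, hma, rfl⟩, mb, hmb, rfl⟩ := h
      obtain ⟨ua, hua⟩ := iha hma
      obtain ⟨ub, hub⟩ := ihb hmb
      refine ⟨max ua ub, fun g' hg' => ?_⟩
      simp only [oeval, Seq.seq, Part.map_eq_map, Part.bind_eq_bind, Part.mem_bind_iff,
        Part.mem_map_iff]
      exact ⟨_, ⟨ma, hua g' (fun i hi => hg' i (lt_of_lt_of_le hi (le_max_left _ _))), rfl⟩,
        mb, hub g' (fun i hi => hg' i (lt_of_lt_of_le hi (le_max_right _ _))), rfl⟩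
  | comp a b iha ihb =>
      obtain ⟨r, hr, hm⟩ := Part.mem_bind_iff.1 h
      obtain ⟨ub, hub⟩ := ihb hr
      obtain ⟨ua, hua⟩ := iha hm
      refine ⟨max ua ub, fun g' hg' => ?_⟩
      exact Part.mem_bind_iff.2 ⟨r, hub g' (fun i hi => hg' i (lt_of_lt_of_le hi (le_max_right _ _))),
        hua g' (fun i hi => hg' i (lt_of_lt_of_le hi (le_max_left _ _)))⟩
  | prec a b iha ihb =>
      have key : ∀ q p m, m ∈ Nat.rec (motive := fun _ => Part ℕ) (oeval g a p)
          (fun y IH => IH >>= fun i => oeval g b (Nat.pair p (Nat.pair y i))) q →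
          ∃ u : ℕ, ∀ g' : ℕ → ℕ, (∀ i < u, g' i = g i) →
            m ∈ Nat.rec (motive := fun _ => Part ℕ) (oeval g' a p)
              (fun y IH => IH >>= fun i => oeval g' b (Nat.pair p (Nat.pair y i))) q := by
        intro q
        induction q with
        | zero => intro p m hm; exact iha hm
        | succ y ih =>
            intro p m hm
            simp only [Part.bind_eq_bind, Part.mem_bind_iff] at hm
            obtain ⟨i, hi, hm⟩ := hm
            obtain ⟨u1, hu1⟩ := ih p i hi
            obtain ⟨u2, hu2⟩ := ihb hm
            refine ⟨max u1 u2, fun g' hg' => ?_⟩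
            simp only [Part.bind_eq_bind, Part.mem_bind_iff]
            exact ⟨i, hu1 g' (fun t ht => hg' t (lt_of_lt_of_le ht (le_max_left _ _))),
              hu2 g' (fun t ht => hg' t (lt_of_lt_of_le ht (le_max_right _ _)))⟩
      simp only [oeval, Nat.unpaired] at h ⊢
      exact key n.unpair.2 n.unpair.1 m h
  | rfind a iha =>
      obtain ⟨h1, hlt⟩ := Nat.mem_rfind.1 h
      obtain ⟨v, hv, hv0⟩ := (Part.mem_map_iff _).1 h1
      simp only [decide_eq_true_eq] at hv0
      have hw : ∀ i, i < m → ∃ u : ℕ, ∀ g' : ℕ → ℕ, (∀ t < u, g' t = g t) →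
          ∃ w, w ∈ oeval g' a (Nat.pair n i) ∧ ¬ w = 0 := by
        intro i hi
        have := hlt hi
        obtain ⟨w, hw1, hw2⟩ := (Part.mem_map_iff _).1 this
        simp only [decide_eq_false_iff_not] at hw2
        obtain ⟨u, hu⟩ := iha hw1
        exact ⟨u, fun g' hg' => ⟨w, hu g' hg', hw2⟩⟩
      choose U hU using hw
      obtain ⟨u0, hu0⟩ := iha hv
      classical
      refine ⟨max u0 ((Finset.range m).sup (fun i => if h : i < m then U i h else 0)),
        fun g' hg' => ?_⟩
      refine Nat.mem_rfind.2 ⟨?_, ?_⟩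
      · exact (Part.mem_map_iff _).2 ⟨v, hu0 g' (fun i hi => hg' i (lt_of_lt_of_le hi (le_max_left _ _))), by simpa using hv0⟩
      · intro i hi
        obtain ⟨w, hw1, hw2⟩ := hU i hi g' (fun t ht => by
          refine hg' t (lt_of_lt_of_le ht (le_trans ?_ (le_max_right _ _)))
          have := Finset.le_sup (f := fun j => if h : j < m then U j h else 0)
            (Finset.mem_range.2 hi)
          simpa [hi] using this)
        exact (Part.mem_map_iff _).2 ⟨w, hw1, by simpa using hw2⟩

namespace OCode

def enc : OCode → ℕ
  | .zero => 0
  | .succ => 1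
  | .left => 2
  | .right => 3
  | .oracle => 4
  | .pair a b => 4 * (Nat.pair (enc a) (enc b)) + 5
  | .comp a b => 4 * (Nat.pair (enc a) (enc b)) + 6
  | .prec a b => 4 * (Nat.pair (enc a) (enc b)) + 7
  | .rfind a => 4 * (Nat.pair (enc a) (enc a)) + 8

theorem enc_inj : Function.Injective enc := by
  intro c₁
  induction c₁ with
  | pair a b iha ihb =>
      intro c₂ h
      cases c₂ <;> simp only [enc] at h <;> try omega
      case pair a' b' =>
        have hp : Nat.pair (enc a) (enc b) = Nat.pair (enc a') (enc b') := by omega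
        rw [Nat.pair_eq_pair] at hp
        rw [iha hp.1, ihb hp.2]
  | comp a b iha ihb =>
      intro c₂ h
      cases c₂ <;> simp only [enc] at h <;> try omega
      case comp a' b' =>
        have hp : Nat.pair (enc a) (enc b) = Nat.pair (enc a') (enc b') := by omega
        rw [Nat.pair_eq_pair] at hp
        rw [iha hp.1, ihb hp.2]
  | prec a b iha ihb =>
      intro c₂ h
      cases c₂ <;> simp only [enc] at h <;> try omega
      case prec a' b' =>
        have hp : Nat.pair (enc a) (enc b) = Nat.pair (enc a') (enc b') := by omega
        rw [Nat.pair_eq_pair] at hp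
        rw [iha hp.1, ihb hp.2]
  | rfind a iha =>
      intro c₂ h
      cases c₂ <;> simp only [enc] at h <;> try omega
      case rfind a' =>
        have hp : Nat.pair (enc a) (enc a) = Nat.pair (enc a') (enc a') := by omega
        rw [Nat.pair_eq_pair] at hp
        rw [iha hp.1]
  | _ =>
      intro c₂ h
      cases c₂ <;> simp only [enc] at h <;> first | rfl | omega
instance : Countable OCode := ⟨⟨enc, enc_inj⟩⟩
instance : Nonempty OCode := ⟨.zero⟩
end OCode


noncomputable def dOC : ℕ → OCode := (exists_surjective_nat OCode).choose
theorem dOC_surj : Function.Surjective dOC := (exists_surjective_nat OCode).choose_spec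

theorem OracleRecursiveIn.of_partrec {g : ℕ →. ℕ} {f : ℕ →. ℕ} (h : Nat.Partrec f) :
    OracleRecursiveIn g f := by
  induction h with
  | zero => exact .zero
  | succ => exact .succ
  | left => exact .left
  | right => exact .right
  | pair _ _ ih1 ih2 => exact .pair ih1 ih2
  | comp _ _ ih1 ih2 => exact .comp ih1 ih2
  | prec _ _ ih1 ih2 => exact .prec ih1 ih2
  | rfind _ ih => exact .rfind ih

theorem OracleRecursiveIn.trans' {g h : ℕ →. ℕ} {f : ℕ →. ℕ} (hf : OracleRecursiveIn g f)
    (hg : OracleRecursiveIn h g) : OracleRecursiveIn h f := by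
  induction hf with
  | zero => exact .zero
  | succ => exact .succ
  | left => exact .left
  | right => exact .right
  | oracle => exact hg
  | pair _ _ ih1 ih2 => exact .pair ih1 ih2
  | comp _ _ ih1 ih2 => exact .comp ih1 ih2
  | prec _ _ ih1 ih2 => exact .prec ih1 ih2
  | rfind _ ih => exact .rfind ih

theorem OracleTuringReducible.trans {f g h : ℕ → ℕ} (h1 : f ≤ᵀ g) (h2 : g ≤ᵀ h) : f ≤ᵀ h :=
  OracleRecursiveIn.trans' h1 h2

/-- composing the oracle with a computable function. -/
theorem recursiveIn_comp_computable {g : ℕ → ℕ} {u : ℕ → ℕ} (hu : Nat.Partrec ↑u) :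
    OracleRecursiveIn ↑g (PFun.lift (fun n => g (u n))) := by
  have := OracleRecursiveIn.comp (g := ↑g) (.oracle) (OracleRecursiveIn.of_partrec hu (g := ↑g))
  have he : (fun n => (↑u : ℕ →. ℕ) n >>= PFun.lift g) = (PFun.lift (fun n => g (u n))) := by
    funext n
    simp [PFun.coe_val, Part.bind_some]
    exact Part.bind_some _ _
  rwa [he] at this

theorem shift_reducible (f : ℕ → ℕ) : OracleTuringReducible (fun n => f (n + 1)) f :=
  recursiveIn_comp_computable (Nat.Partrec.of_primrec Nat.Primrec.succ)

/-- post-composing with a computable function of the input and oracle value. -/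
theorem cons_reducible (k : ℕ) (x : ℕ → ℕ) :
    OracleTuringReducible (fun n => if n = 0 then k else x (n - 1)) x := by
  -- step 1: n ↦ x (n-1)
  have h1 : OracleRecursiveIn ↑x ↑(fun n => x (n - 1)) :=
    recursiveIn_comp_computable (Nat.Partrec.of_primrec Nat.Primrec.pred)
  -- step 2: n ↦ pair n (x (n-1))
  have hid : OracleRecursiveIn ↑x ↑(fun n : ℕ => n) :=
    OracleRecursiveIn.of_partrec (Nat.Partrec.of_primrec Nat.Primrec.id)
  have h2 := OracleRecursiveIn.pair hid h1
  have he2 : (fun n => Nat.pair <$> (↑(fun n : ℕ => n) : ℕ →. ℕ) n <*> (↑(fun n => x (n - 1)) : ℕ →. ℕ) n)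
      = (PFun.lift (fun n => Nat.pair n (x (n - 1)))) := by
    funext n
    simp [PFun.coe_val, Seq.seq]
  rw [he2] at h2
  -- step 3: post-compose with φ(p) = if p.unpair.1 = 0 then k else p.unpair.2
  have hφ : Nat.Partrec (PFun.lift (fun p : ℕ => if p.unpair.1 = 0 then k else p.unpair.2)) := by
    apply Nat.Partrec.of_primrec
    rw [← Primrec.nat_iff]
    exact Primrec.ite (Primrec.eq.comp (Primrec.fst.comp Primrec.unpair) (Primrec.const 0))
      (Primrec.const k) (Primrec.snd.comp Primrec.unpair)
  have h3 := OracleRecursiveIn.comp (OracleRecursiveIn.of_partrec hφ (g := ↑x)) h2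
  have he3 : (fun n => (PFun.lift (fun n => Nat.pair n (x (n - 1)))) n >>=
      (PFun.lift (fun p : ℕ => if p.unpair.1 = 0 then k else p.unpair.2)))
      = (PFun.lift (fun n => if n = 0 then k else x (n - 1))) := by
    funext n
    simp [PFun.coe_val, Part.bind_some, Nat.unpair_pair]
    exact (Part.bind_some _ _).trans (by simp [Nat.unpair_pair])
  rwa [he3] at h3

open Classical in
noncomputable def step (t : ℕ) (c : ℕ × (ℕ → ℕ)) : ℕ × (ℕ → ℕ) :=
  if h : t.unpair.1.unpair.1 < t.unpair.1.unpair.2 ∧ ∃ (y : ℕ → ℕ) (m : ℕ),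
      (∀ n, Nat.pair t.unpair.1.unpair.2 n < c.1 →
        y n = c.2 (Nat.pair t.unpair.1.unpair.2 n)) ∧ m ∈ oeval y (dOC t.unpair.2) c.1 then
    let y := h.2.choose
    let m := h.2.choose_spec.choose
    let u := (oeval_use (dOC t.unpair.2) h.2.choose_spec.choose_spec.2).choose
    (Nat.pair t.unpair.1.unpair.1 c.1 + Nat.pair t.unpair.1.unpair.2 u + c.1 + u + 2,
      fun p => if p = Nat.pair t.unpair.1.unpair.1 c.1 then m + 1
        else if p.unpair.1 = t.unpair.1.unpair.2 ∧ ¬ p < c.1 then y p.unpair.2 else c.2 p)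
  else (c.1 + 1, c.2)

noncomputable def stages : ℕ → ℕ × (ℕ → ℕ)
  | 0 => (0, fun _ => 0)
  | t + 1 => step t (stages t)

theorem step_len (t : ℕ) (c : ℕ × (ℕ → ℕ)) : c.1 < (step t c).1 := by
  unfold step
  split <;> simp <;> omega

theorem step_preserves (t : ℕ) (c : ℕ × (ℕ → ℕ)) {p : ℕ} (hp : p < c.1) :
    (step t c).2 p = c.2 p := by
  unfold step
  split
  · simp only
    rw [if_neg, if_neg]
    · simp [hp]
    · intro h
      have := Nat.right_le_pair t.unpair.1.unpair.1 c.1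
      omega
  · rfl

theorem stages_len_mono : Monotone (fun t => (stages t).1) := by
  apply monotone_nat_of_le_succ
  intro t
  exact le_of_lt (step_len t (stages t))

theorem stages_len_ge (t : ℕ) : t ≤ (stages t).1 := by
  induction t with
  | zero => simp
  | succ t ih => have := step_len t (stages t); simpa [stages] using by omega

theorem stages_preserves {t s : ℕ} (hts : t ≤ s) {p : ℕ} (hp : p < (stages t).1) :
    (stages s).2 p = (stages t).2 p := by
  induction s with
  | zero => cases Nat.le_zero.1 hts; rfl
  | succ s ih =>
      rcases Nat.lt_or_ge t (s+1) with h | h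
      · have hts' : t ≤ s := by omega
        rw [stages, step_preserves s (stages s) (lt_of_lt_of_le hp (stages_len_mono hts'))]
        exact ih hts'
      · have : t = s + 1 := le_antisymm hts h
        subst this; rfl

noncomputable def XX : ℕ → ℕ := fun p => (stages (p+1)).2 p

theorem XX_eq {t p : ℕ} (hp : p < (stages t).1) : XX p = (stages t).2 p := by
  unfold XX
  rcases le_or_gt t (p+1) with h | h
  · exact stages_preserves h hp
  · have h2 : p < (stages (p+1)).1 := lt_of_lt_of_le (Nat.lt_succ_self p) (stages_len_ge (p+1))
    exact (stages_preserves (le_of_lt h) h2).symm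

noncomputable def xx (j n : ℕ) : ℕ := XX (Nat.pair j n)


theorem step_hit {t j k : ℕ} (hj : t.unpair.1.unpair.1 = j) (hk : t.unpair.1.unpair.2 = k)
    (hjk : j < k) (cnd : ℕ × (ℕ → ℕ))
    (hP : ∃ (y : ℕ → ℕ) (m : ℕ), (∀ n, Nat.pair k n < cnd.1 → y n = cnd.2 (Nat.pair k n)) ∧
      m ∈ oeval y (dOC t.unpair.2) cnd.1) :
    ∃ (y : ℕ → ℕ) (m u : ℕ),
      (∀ g' : ℕ → ℕ, (∀ i' < u, g' i' = y i') → m ∈ oeval g' (dOC t.unpair.2) cnd.1) ∧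
      (∀ n, Nat.pair k n < cnd.1 → y n = cnd.2 (Nat.pair k n)) ∧
      step t cnd = (Nat.pair j cnd.1 + Nat.pair k u + cnd.1 + u + 2,
        fun p => if p = Nat.pair j cnd.1 then m + 1
          else if p.unpair.1 = k ∧ ¬ p < cnd.1 then y p.unpair.2 else cnd.2 p) := by
  subst hj; subst hk
  have hcond : t.unpair.1.unpair.1 < t.unpair.1.unpair.2 ∧ ∃ (y : ℕ → ℕ) (m : ℕ),
      (∀ n, Nat.pair t.unpair.1.unpair.2 n < cnd.1 →
        y n = cnd.2 (Nat.pair t.unpair.1.unpair.2 n)) ∧ m ∈ oeval y (dOC t.unpair.2) cnd.1 :=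
    ⟨hjk, hP⟩
  unfold step
  rw [dif_pos hcond]
  exact ⟨hcond.2.choose, hcond.2.choose_spec.choose,
    (oeval_use (dOC t.unpair.2) hcond.2.choose_spec.choose_spec.2).choose,
    (oeval_use (dOC t.unpair.2) hcond.2.choose_spec.choose_spec.2).choose_spec,
    hcond.2.choose_spec.choose_spec.1, rfl⟩

theorem key_diag {j k : ℕ} (hjk : j < k) (c : OCode)
    (heval : oeval (xx k) c = ↑(xx j)) : False := by
  obtain ⟨i, hi⟩ := dOC_surj c
  have hj1 : (Nat.pair (Nat.pair j k) i).unpair.1.unpair.1 = j := by simp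
  have hk1 : (Nat.pair (Nat.pair j k) i).unpair.1.unpair.2 = k := by simp
  have hi1 : (Nat.pair (Nat.pair j k) i).unpair.2 = i := by simp
  set t := Nat.pair (Nat.pair j k) i with ht
  set L := (stages t).1 with hL
  set v := (stages t).2 with hv
  have hP : ∃ (y : ℕ → ℕ) (m : ℕ),
      (∀ n, Nat.pair k n < (stages t).1 → y n = (stages t).2 (Nat.pair k n)) ∧
      m ∈ oeval y (dOC t.unpair.2) (stages t).1 := by
    refine ⟨xx k, xx j L, fun n hn => ?_, ?_⟩
    · exact XX_eq hn
    · rw [hi1, hi, heval]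
      simp
      rfl
  obtain ⟨y, m, u, huse, hyv, hst⟩ := step_hit hj1 hk1 hjk (stages t) hP
  have hstage : stages (t+1) = step t (stages t) := rfl
  rw [hst] at hstage
  have hL' : (stages (t+1)).1 = Nat.pair j L + Nat.pair k u + L + u + 2 := by rw [hstage]
  have hv' : (stages (t+1)).2 = fun p => if p = Nat.pair j L then m + 1
      else if p.unpair.1 = k ∧ ¬ p < L then y p.unpair.2 else v p := by rw [hstage]
  have hdiag : XX (Nat.pair j L) = m + 1 := by
    have hlt : Nat.pair j L < (stages (t+1)).1 := by rw [hL']; omega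
    rw [XX_eq hlt, hv']
    simp
  have hagree : ∀ i' < u, xx k i' = y i' := by
    intro i' hi'
    show XX (Nat.pair k i') = y i'
    rcases Nat.lt_or_ge (Nat.pair k i') L with hcase | hcase
    · rw [XX_eq hcase]
      exact (hyv i' hcase).symm
    · have hlt : Nat.pair k i' < (stages (t+1)).1 := by
        have h1 : Nat.pair k i' < Nat.pair k u := Nat.pair_lt_pair_right k hi'
        rw [hL']; omega
      rw [XX_eq hlt, hv']
      have hne : Nat.pair k i' ≠ Nat.pair j L := by
        intro hcontra
        have := (Nat.pair_eq_pair.1 hcontra).1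
        omega
      simp only [if_neg hne]
      rw [if_pos ⟨by simp, by omega⟩]
      simp
  have hmem : m ∈ oeval (xx k) (dOC t.unpair.2) L := huse (xx k) hagree
  rw [hi1, hi, heval] at hmem
  simp only [PFun.coe_val, Part.mem_some_iff] at hmem
  have : xx j L = m + 1 := hdiag
  omega




noncomputable def ffQ (k : ℕ) : ℕ → ℕ := fun n => if n = 0 then k else xx k (n - 1)

theorem ffQ_zero (k : ℕ) : ffQ k 0 = k := rfl

theorem xx_red_ffQ (k : ℕ) : xx k ≤ᵀ ffQ k := by
  have := shift_reducible (ffQ k)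
  have he : (fun n => ffQ k (n + 1)) = xx k := by
    funext n; simp [ffQ]
  rwa [he] at this

theorem ffQ_red_xx (k : ℕ) : ffQ k ≤ᵀ xx k := cons_reducible k (xx k)

theorem key_diag' {j k : ℕ} (hjk : j < k) (hred : xx j ≤ᵀ xx k) : False := by
  obtain ⟨c, hc⟩ := exists_code hred
  exact key_diag hjk c hc

theorem closed_baire_not_medvedev_equiv_closed_cantor' :
    ∃ Q : Set (ℕ → ℕ), Q.Nonempty ∧ IsClosed Q ∧
      ∀ P : Set (ℕ → ℕ), IsClosed P → P ⊆ {f : ℕ → ℕ | ∀ n, f n ≤ 1} →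
        ¬ ∃ Φ Ψ : (ℕ → ℕ) → (ℕ → ℕ),
            Continuous Ψ ∧ Φ '' Q ⊆ P ∧ Ψ '' P ⊆ Q ∧
            (∀ f ∈ Q, Φ f ≤ᵀ f) ∧ (∀ h ∈ P, Ψ h ≤ᵀ h) := by
  refine ⟨Set.range ffQ, ⟨ffQ 0, ⟨0, rfl⟩⟩, ?_, ?_⟩
  · -- closedness
    rw [← isOpen_compl_iff, isOpen_iff_mem_nhds]
    intro g hg
    have hne : g ≠ ffQ (g 0) := fun h => hg ⟨g 0, h.symm⟩
    obtain ⟨m, hm⟩ : ∃ m, g m ≠ ffQ (g 0) m := by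
      by_contra hcon
      push_neg at hcon
      exact hne (funext hcon)
    have hopen : IsOpen (((fun h : ℕ → ℕ => h 0) ⁻¹' {g 0}) ∩ ((fun h : ℕ → ℕ => h m) ⁻¹' {g m})) := by
      have h1 : IsOpen ((fun h : ℕ → ℕ => h 0) ⁻¹' {g 0}) :=
        (isOpen_discrete {g 0}).preimage (continuous_apply 0)
      have h2 : IsOpen ((fun h : ℕ → ℕ => h m) ⁻¹' {g m}) :=
        (isOpen_discrete {g m}).preimage (continuous_apply m)
      exact h1.inter h2
    refine Filter.mem_of_superset (hopen.mem_nhds ⟨rfl, rfl⟩) ?_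
    rintro h ⟨h0, hmm⟩ ⟨k, rfl⟩
    simp only [Set.mem_preimage, Set.mem_singleton_iff] at h0 hmm
    rw [ffQ_zero] at h0
    subst h0
    exact hm (by rw [← hmm])
  · rintro P hPc hPsub ⟨Φ, Ψ, hΨc, hΦQ, hΨP, hΦred, hΨred⟩
    -- Cantor space is compact
    have hCantor : IsCompact {f : ℕ → ℕ | ∀ n, f n ≤ 1} := by
      have : {f : ℕ → ℕ | ∀ n, f n ≤ 1} = Set.univ.pi (fun _ : ℕ => Set.Iic 1) := by
        ext f; simp [Set.mem_pi]
        rfl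
      rw [this]
      exact isCompact_univ_pi (fun _ => (Set.finite_Iic 1).isCompact)
    have hPcomp : IsCompact P := IsCompact.of_isClosed_subset hCantor hPc hPsub
    have hKcomp : IsCompact (Ψ '' P) := hPcomp.image hΨc
    have hScomp : IsCompact ((fun g : ℕ → ℕ => g 0) '' (Ψ '' P)) :=
      hKcomp.image (continuous_apply 0)
    obtain ⟨B, hB⟩ := hScomp.finite_of_discrete.bddAbove
    -- the diagonal member of Q
    have hfQ : ffQ (B + 1) ∈ Set.range ffQ := ⟨B + 1, rfl⟩
    have hhP : Φ (ffQ (B + 1)) ∈ P := hΦQ ⟨ffQ (B + 1), hfQ, rfl⟩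
    have hgK : Ψ (Φ (ffQ (B + 1))) ∈ Ψ '' P := ⟨Φ (ffQ (B + 1)), hhP, rfl⟩
    obtain ⟨kg, hkg⟩ := hΨP hgK
    have hkg0 : kg = Ψ (Φ (ffQ (B + 1))) 0 := by rw [← hkg, ffQ_zero]
    have hkgB : kg ≤ B := by
      rw [hkg0]
      exact hB ⟨Ψ (Φ (ffQ (B + 1))), hgK, rfl⟩
    -- reducibilities
    have r1 : Φ (ffQ (B + 1)) ≤ᵀ ffQ (B + 1) := hΦred _ hfQ
    have r2 : Ψ (Φ (ffQ (B + 1))) ≤ᵀ Φ (ffQ (B + 1)) := hΨred _ hhP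
    have r3 : ffQ kg ≤ᵀ ffQ (B + 1) := by
      rw [hkg]
      exact r2.trans r1
    have r4 : xx kg ≤ᵀ xx (B + 1) :=
      ((xx_red_ffQ kg).trans r3).trans (ffQ_red_xx (B + 1))
    exact key_diag' (Nat.lt_succ_of_le hkgB) r4

/-- There is a nonempty closed subset `Q` of Baire space (`ℕ → ℕ` with the product topology)
such that for every closed subset `P` of Cantor space (identified with the closed set
`{f | ∀ n, f n ≤ 1}` of Baire space) there are no maps `Φ, Ψ` with `Ψ` continuous,
`Φ '' Q ⊆ P`, `Ψ '' P ⊆ Q`, `Φ f ≤ᵀ f` on `Q` and `Ψ h ≤ᵀ h` on `P`. -/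
theorem closed_baire_not_medvedev_equiv_closed_cantor :
    ∃ Q : Set (ℕ → ℕ), Q.Nonempty ∧ IsClosed Q ∧
      ∀ P : Set (ℕ → ℕ), IsClosed P → P ⊆ {f : ℕ → ℕ | ∀ n, f n ≤ 1} →
        ¬ ∃ Φ Ψ : (ℕ → ℕ) → (ℕ → ℕ),
            Continuous Ψ ∧ Φ '' Q ⊆ P ∧ Ψ '' P ⊆ Q ∧
            (∀ f ∈ Q, Φ f ≤ᵀ f) ∧ (∀ h ∈ P, Ψ h ≤ᵀ h) := by
  exact closed_baire_not_medvedev_equiv_closed_cantor'
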